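/- arXiv:2604.17369 — 5 statements merged into one kernel-verified Lean document; each statement's English description precedes it below -/
import Mathlib

section
/- Let M be a positive semidefinite operator on a finite-dimensional complex Hilbert space, and let |ψ⟩ be a vector in the support (range) of M. Then M ≥ |ψ⟩⟨ψ| in the Löwner order if and only if ⟨ψ| M⁻¹ |ψ⟩ ≤ 1, where M⁻¹ denotes the Moore–Penrose pseudoinverse of M. -/
open ComplexOrder Matrix

/-- Cauchy–Schwarz for the complex dot product. -/
lemma cs_dot {n : Type*} [Fintype n] (p q : n → ℂ) :
    ‖star p ⬝ᵥ q‖ ^ 2 ≤ (star p ⬝ᵥ p).re * (star q ⬝ᵥ q).re := by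
  have h1 := norm_inner_le_norm (𝕜 := ℂ)
    ((WithLp.equiv 2 (n → ℂ)).symm p) ((WithLp.equiv 2 (n → ℂ)).symm q)
  have hip : ∀ x y : n → ℂ, inner ℂ ((WithLp.equiv 2 (n → ℂ)).symm x)
      ((WithLp.equiv 2 (n → ℂ)).symm y) = star x ⬝ᵥ y := fun x y => by
    rw [EuclideanSpace.inner_eq_star_dotProduct]; simp [dotProduct_comm]
  rw [hip] at h1
  have h2 := inner_self_eq_norm_sq (𝕜 := ℂ) ((WithLp.equiv 2 (n → ℂ)).symm p)
  have h3 := inner_self_eq_norm_sq (𝕜 := ℂ) ((WithLp.equiv 2 (n → ℂ)).symm q)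
  rw [hip] at h2 h3
  simp only [RCLike.re_to_complex] at h2 h3
  rw [h2, h3]
  calc ‖star p ⬝ᵥ q‖ ^ 2
      ≤ (‖(WithLp.equiv 2 (n → ℂ)).symm p‖ * ‖(WithLp.equiv 2 (n → ℂ)).symm q‖) ^ 2 :=
        pow_le_pow_left₀ (norm_nonneg _) h1 2
    _ = _ := by ring

lemma vecMulVec_mulVec' {n : Type*} [Fintype n] (a b x : n → ℂ) :
    (vecMulVec a b) *ᵥ x = (b ⬝ᵥ x) • a := by
  ext i
  simp only [mulVec, vecMulVec_apply, dotProduct, Pi.smul_apply, smul_eq_mul, Finset.sum_mul]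
  exact Finset.sum_congr rfl fun j _ => by ring

lemma quad_rankOne {n : Type*} [Fintype n] (a x : n → ℂ) :
    star x ⬝ᵥ (vecMulVec a (star a)) *ᵥ x = (star a ⬝ᵥ x) * star (star a ⬝ᵥ x) := by
  rw [vecMulVec_mulVec', dotProduct_smul, smul_eq_mul]
  congr 1
  exact star_dotProduct x a

/-- Let `M` be positive semidefinite on a finite-dimensional complex Hilbert space,
`Minv` its Moore–Penrose pseudoinverse (characterized by the four Penrose axioms),
and `ψ` a vector in the range of `M`.  Then `M ≥ |ψ⟩⟨ψ|` in the Löwner order iff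
`⟨ψ|M⁻¹|ψ⟩ ≤ 1`. -/
theorem psd_rankOne_le_iff_pinv {n : Type*} [Fintype n] [DecidableEq n]
    (M Minv : Matrix n n ℂ) (hM : M.PosSemidef)
    (h1 : M * Minv * M = M) (h2 : Minv * M * Minv = Minv)
    (h3 : (M * Minv)ᴴ = M * Minv) (h4 : (Minv * M)ᴴ = Minv * M)
    (ψ : n → ℂ) (hψ : ∃ v, M.mulVec v = ψ) :
    (M - Matrix.vecMulVec ψ (star ψ)).PosSemidef ↔ star ψ ⬝ᵥ Minv.mulVec ψ ≤ 1 := by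
  obtain ⟨v, hv⟩ := hψ
  have hMH : Mᴴ = M := hM.1
  -- key identity: Minv * M * M = M
  have key : Minv * M * M = M := by
    have e1 : Minv * M * M = M * Minvᴴ * M := by
      conv_lhs => rw [← h4, conjTranspose_mul, hMH]
    have e2 : (M * Minvᴴ * M)ᴴ = M := by
      simp only [conjTranspose_mul, conjTranspose_conjTranspose, hMH, ← mul_assoc]
      exact h1
    rw [e1, ← conjTranspose_conjTranspose (M * Minvᴴ * M), e2, hMH]
  have hstarψ : star ψ = star v ᵥ* M := by rw [← hv, star_mulVec, hMH]
  have hdot : ∀ x : n → ℂ, star ψ ⬝ᵥ x = star v ⬝ᵥ M *ᵥ x := fun x => by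
    rw [hstarψ, dotProduct_mulVec]
  set t := star ψ ⬝ᵥ Minv.mulVec ψ with htdef
  have ht : t = star v ⬝ᵥ M *ᵥ v := by
    calc t = star v ⬝ᵥ M *ᵥ (Minv *ᵥ (M *ᵥ v)) := by rw [htdef, hdot, hv]
      _ = star v ⬝ᵥ (M * Minv * M) *ᵥ v := by
          rw [mulVec_mulVec, mulVec_mulVec, mul_assoc]
      _ = star v ⬝ᵥ M *ᵥ v := by rw [h1]
  have ht0 : 0 ≤ t := ht ▸ hM.dotProduct_mulVec_nonneg v
  have htim : t.im = 0 := by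
    rw [Complex.le_def] at ht0; exact ht0.2.symm
  have htre : 0 ≤ t.re := by
    rw [Complex.le_def] at ht0; simpa using ht0.1
  constructor
  · -- forward
    intro h
    set x := Minv *ᵥ ψ with hxdef
    have hxv : x = (Minv * M) *ᵥ v := by rw [hxdef, ← hv, mulVec_mulVec]
    have move : ∀ (A : Matrix n n ℂ) (a w : n → ℂ),
        star (A *ᵥ a) ⬝ᵥ w = star a ⬝ᵥ (Aᴴ *ᵥ w) := by
      intro A a w
      rw [star_mulVec, dotProduct_mulVec]
    have hq : star x ⬝ᵥ M *ᵥ x = t := by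
      calc star x ⬝ᵥ M *ᵥ x
          = star v ⬝ᵥ (Minv * M)ᴴ *ᵥ (M *ᵥ ((Minv * M) *ᵥ v)) := by rw [hxv, move]
        _ = star v ⬝ᵥ M *ᵥ v := by
            rw [h4, mulVec_mulVec, mulVec_mulVec, key, ← mul_assoc, h1]
        _ = t := ht.symm
    have hx := h.dotProduct_mulVec_nonneg x
    rw [sub_mulVec, dotProduct_sub, quad_rankOne, hq] at hx
    rw [← htdef] at hx
    rw [Complex.le_def] at hx
    simp only [Complex.sub_re, Complex.sub_im, Complex.zero_re, Complex.zero_im,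
      Complex.mul_re, Complex.mul_im, Complex.star_def, Complex.conj_re, Complex.conj_im,
      htim] at hx
    rw [Complex.le_def]
    refine ⟨?_, by simp [htim]⟩
    simp only [Complex.one_re]
    nlinarith [hx.1, htre]
  · -- backward
    intro h
    have htre1 : t.re ≤ 1 := by
      rw [Complex.le_def] at h; simpa using h.1
    have hherm : (vecMulVec ψ (star ψ))ᴴ = vecMulVec ψ (star ψ) := by
      ext i j
      simp [vecMulVec_apply, conjTranspose_apply, mul_comm]
    refine PosSemidef.of_dotProduct_mulVec_nonneg (hM.1.sub hherm) fun x => ?_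
    open MatrixOrder in set S := CFC.sqrt M with hS
    have SH : Sᴴ = S := open MatrixOrder in (CFC.sqrt_nonneg M).posSemidef.1
    have SS : S * S = M := open MatrixOrder in CFC.sqrt_mul_sqrt_self M hM.nonneg
    have factor : ∀ a b : n → ℂ, star a ⬝ᵥ M *ᵥ b = star (S *ᵥ a) ⬝ᵥ (S *ᵥ b) := by
      intro a b
      rw [star_mulVec, SH, ← dotProduct_mulVec, mulVec_mulVec, SS]
    set c := star ψ ⬝ᵥ x with hcdef
    have hc : ‖c‖ ^ 2 ≤ t.re * (star x ⬝ᵥ M *ᵥ x).re := by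
      have := cs_dot (S *ᵥ v) (S *ᵥ x)
      rw [← factor, ← factor, ← factor, ← ht, ← hdot] at this
      exact this
    have hq0 := hM.dotProduct_mulVec_nonneg x
    rw [Complex.le_def] at hq0
    have hqim : (star x ⬝ᵥ M *ᵥ x).im = 0 := hq0.2.symm
    have hqre : 0 ≤ (star x ⬝ᵥ M *ᵥ x).re := by simpa using hq0.1
    rw [sub_mulVec, dotProduct_sub, quad_rankOne, ← hcdef]
    have hcc : c * star c = ((Complex.normSq c : ℝ) : ℂ) := by
      rw [Complex.star_def, Complex.mul_conj]
    have hnorm : Complex.normSq c = ‖c‖ ^ 2 := by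
      rw [Complex.normSq_eq_norm_sq]
    rw [hcc, Complex.le_def]
    constructor
    · simp only [Complex.zero_re, Complex.sub_re, Complex.ofReal_re, hnorm]
      nlinarith [hc, hqre, htre1, htre, sq_nonneg ‖c‖]
    · simp [hqim]
end

section
/- Let M be a square complex matrix with M² = 0. Then the trace norm satisfies ‖M + M†‖₁ = 2‖M‖₁. -/
open Matrix ComplexOrder

/-- The trace norm (Schatten 1-norm) of a complex square matrix: `‖A‖₁ = tr √(AᴴA)`. -/
noncomputable def traceNorm {n : Type*} [Fintype n] [DecidableEq n] (A : Matrix n n ℂ) : ℝ :=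
  (((Matrix.posSemidef_conjTranspose_mul_self A).1.eigenvectorUnitary.1 *
      diagonal (((↑) : ℝ → ℂ) ∘ (√·) ∘ (Matrix.posSemidef_conjTranspose_mul_self A).1.eigenvalues) *
      (star (Matrix.posSemidef_conjTranspose_mul_self A).1.eigenvectorUnitary : Matrix n n ℂ)).trace).re

/-- The square root of a positive semidefinite matrix (removed from Mathlib). -/
noncomputable abbrev Matrix.PosSemidef.sqrt {n : Type*} [Fintype n] [DecidableEq n]
    {A : Matrix n n ℂ} (hA : A.PosSemidef) : Matrix n n ℂ :=
  hA.1.eigenvectorUnitary.1 * diagonal (((↑) : ℝ → ℂ) ∘ (√·) ∘ hA.1.eigenvalues) *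
    (star hA.1.eigenvectorUnitary : Matrix n n ℂ)

namespace Matrix.PosSemidef

open scoped MatrixOrder

variable {n : Type*} [Fintype n] [DecidableEq n]

lemma sqrt_eq_cfcSqrt {A : Matrix n n ℂ} (hA : A.PosSemidef) : hA.sqrt = CFC.sqrt A := by
  rw [CFC.sqrt_eq_cfc, cfc_nnreal_eq_real _ A, hA.1.cfc_eq]
  rw [IsHermitian.cfc, Unitary.conjStarAlgAut_apply]
  unfold Matrix.PosSemidef.sqrt
  congr 3
  funext i
  simp [max_eq_left (hA.eigenvalues_nonneg i)]

lemma posSemidef_sqrt {A : Matrix n n ℂ} (hA : A.PosSemidef) : hA.sqrt.PosSemidef := by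
  rw [sqrt_eq_cfcSqrt]
  exact (CFC.sqrt_nonneg A).posSemidef

lemma sqrt_mul_self {A : Matrix n n ℂ} (hA : A.PosSemidef) : hA.sqrt * hA.sqrt = A := by
  rw [sqrt_eq_cfcSqrt]
  exact CFC.sqrt_mul_sqrt_self A hA.nonneg

lemma eq_sqrt_of_sq_eq {A B : Matrix n n ℂ} (hA : A.PosSemidef) (hB : B.PosSemidef)
    (hAB : A ^ 2 = B) : A = hB.sqrt := by
  rw [sqrt_eq_cfcSqrt]
  exact ((CFC.sqrt_eq_iff B A hB.nonneg hA.nonneg).mpr (by rw [← sq]; exact hAB)).symm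

end Matrix.PosSemidef

lemma traceNorm_eq_sqrt {n : Type*} [Fintype n] [DecidableEq n] (A : Matrix n n ℂ) :
    traceNorm A = (Matrix.posSemidef_conjTranspose_mul_self A).sqrt.trace.re := rfl

section Aux

open Polynomial

variable {n : Type*} [Fintype n] [DecidableEq n]

private lemma aux_charpoly_mul_comm (A B : Matrix n n ℂ) :
    (A * B).charpoly = (B * A).charpoly := by
  classical
  set A' : Matrix n n ℂ[X] := A.map C with hA'
  set B' : Matrix n n ℂ[X] := B.map C with hB'
  have hmapAB : (A * B).map (C : ℂ →+* ℂ[X]) = A' * B' := by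
    simp [hA', hB', Matrix.map_mul]
  have hmapBA : (B * A).map (C : ℂ →+* ℂ[X]) = B' * A' := by
    simp [hA', hB', Matrix.map_mul]
  have key : (Matrix.scalar n (X : ℂ[X]) - A' * B').det * (X : ℂ[X]) ^ Fintype.card n
      = (X : ℂ[X]) ^ Fintype.card n * (Matrix.scalar n (X : ℂ[X]) - B' * A').det := by
    have h1 : fromBlocks (Matrix.scalar n (X : ℂ[X])) A' B' 1 *
        fromBlocks 1 0 (-B') (Matrix.scalar n (X : ℂ[X]))
        = fromBlocks (Matrix.scalar n (X : ℂ[X]) - A' * B') (A' * Matrix.scalar n (X : ℂ[X])) 0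
          (Matrix.scalar n (X : ℂ[X])) := by
      rw [Matrix.fromBlocks_multiply]
      congr 1 <;> simp [mul_comm, sub_eq_add_neg, Matrix.mul_neg]
    have h2 : fromBlocks 1 0 (-B') (Matrix.scalar n (X : ℂ[X])) *
        fromBlocks (Matrix.scalar n (X : ℂ[X])) A' B' 1
        = fromBlocks (Matrix.scalar n (X : ℂ[X])) A' 0
          (Matrix.scalar n (X : ℂ[X]) - B' * A') := by
      have hcomm : B' * Matrix.scalar n (X : ℂ[X]) = Matrix.scalar n (X : ℂ[X]) * B' :=
        (Matrix.scalar_commute (X : ℂ[X]) (fun r' => Commute.all _ _) B').eq.symm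
      rw [Matrix.fromBlocks_multiply]
      simp only [Matrix.scalar_apply] at hcomm
      simp [hcomm, Matrix.neg_mul, neg_add_eq_sub, sub_eq_zero]
    have hdet : (fromBlocks (Matrix.scalar n (X : ℂ[X])) A' B' 1 *
        fromBlocks 1 0 (-B') (Matrix.scalar n (X : ℂ[X]))).det
        = (fromBlocks 1 0 (-B') (Matrix.scalar n (X : ℂ[X])) *
        fromBlocks (Matrix.scalar n (X : ℂ[X])) A' B' 1).det := by
      rw [Matrix.det_mul, Matrix.det_mul, mul_comm]
    rw [h1, h2, Matrix.det_fromBlocks_zero₂₁, Matrix.det_fromBlocks_zero₂₁] at hdet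
    simpa [Matrix.det_one, Matrix.scalar_apply, Matrix.det_diagonal] using hdet
  have hX : ((X : ℂ[X]) ^ Fintype.card n) ≠ 0 := pow_ne_zero _ X_ne_zero
  unfold Matrix.charpoly charmatrix
  rw [RingHom.mapMatrix_apply, RingHom.mapMatrix_apply, hmapAB, hmapBA]
  rw [mul_comm ((X : ℂ[X]) ^ Fintype.card n) _] at key
  exact mul_right_cancel₀ hX key

private lemma aux_charpoly_hermitian {A : Matrix n n ℂ} (hA : A.IsHermitian) :
    A.charpoly = ∏ i, (X - C (hA.eigenvalues i : ℂ)) := by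
  classical
  set U : Matrix n n ℂ := (hA.eigenvectorUnitary : Matrix n n ℂ) with hU
  set D : Matrix n n ℂ := diagonal ((↑) ∘ hA.eigenvalues) with hD
  have hspec : A = U * D * star U := hA.spectral_theorem
  have hUU : U * star U = 1 := (Matrix.mem_unitaryGroup_iff).mp hA.eigenvectorUnitary.2
  have hconj : A.charpoly = D.charpoly := by
    unfold Matrix.charpoly charmatrix
    have hmap1 : (U.map (C : ℂ →+* ℂ[X])) * ((star U).map (C : ℂ →+* ℂ[X])) = 1 := by
      rw [← Matrix.map_mul, hUU]
      simp
    have key : Matrix.scalar n (X : ℂ[X]) - (C : ℂ →+* ℂ[X]).mapMatrix A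
        = (U.map (C : ℂ →+* ℂ[X])) *
          (Matrix.scalar n (X : ℂ[X]) - (C : ℂ →+* ℂ[X]).mapMatrix D) *
          ((star U).map (C : ℂ →+* ℂ[X])) := by
      rw [Matrix.mul_sub, Matrix.sub_mul]
      congr 1
      · have : (U.map (C : ℂ →+* ℂ[X])) * Matrix.scalar n (X : ℂ[X])
            = Matrix.scalar n (X : ℂ[X]) * (U.map (C : ℂ →+* ℂ[X])) :=
          ((Matrix.scalar_commute (X : ℂ[X]) (fun r' => Commute.all _ _) _).eq).symm
        rw [this, Matrix.mul_assoc, hmap1, Matrix.mul_one]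
      · rw [hspec]
        simp [RingHom.mapMatrix_apply, Matrix.map_mul, Matrix.mul_assoc]
    rw [key, Matrix.det_mul, Matrix.det_mul]
    rw [mul_comm, ← mul_assoc, ← Matrix.det_mul]
    have hmap2 : ((star U).map (C : ℂ →+* ℂ[X])) * (U.map (C : ℂ →+* ℂ[X])) = 1 := by
      rw [← Matrix.map_mul, (Matrix.mem_unitaryGroup_iff').mp hA.eigenvectorUnitary.2]
      simp
    rw [hmap2, Matrix.det_one, one_mul]
  rw [hconj, hD]
  unfold Matrix.charpoly charmatrix
  rw [RingHom.mapMatrix_apply]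
  have : (Matrix.scalar n (X : ℂ[X])) - (diagonal ((↑) ∘ hA.eigenvalues) : Matrix n n ℂ).map C
      = diagonal (fun i => X - C (hA.eigenvalues i : ℂ)) := by
    rw [Matrix.scalar_apply, Matrix.diagonal_map (by simp), ← Matrix.diagonal_sub]
    rfl
  rw [this, Matrix.det_diagonal]

private lemma aux_trace_sqrt {A : Matrix n n ℂ} (hA : A.PosSemidef) :
    hA.sqrt.trace = ∑ i, (Real.sqrt (hA.1.eigenvalues i) : ℂ) := by
  unfold Matrix.PosSemidef.sqrt
  rw [Matrix.trace_mul_comm, ← Matrix.mul_assoc,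
    (Matrix.mem_unitaryGroup_iff').mp hA.1.eigenvectorUnitary.2, Matrix.one_mul,
    Matrix.trace_diagonal]
  rfl

private lemma aux_eig_multiset {A B : Matrix n n ℂ}
    (hA : A.IsHermitian) (hB : B.IsHermitian) (h : A.charpoly = B.charpoly) :
    Multiset.map hA.eigenvalues Finset.univ.val = Multiset.map hB.eigenvalues Finset.univ.val := by
  classical
  have key : ∀ {C' : Matrix n n ℂ} (hC : C'.IsHermitian),
      C'.charpoly = (Multiset.map (fun a : ℂ => X - Polynomial.C a)
        (Multiset.map (fun r : ℝ => (r : ℂ))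
          (Multiset.map hC.eigenvalues Finset.univ.val))).prod := by
    intro C' hC
    rw [aux_charpoly_hermitian hC, Finset.prod_eq_multiset_prod, Multiset.map_map,
      Multiset.map_map]
    rfl
  have hA' := key hA
  have hB' := key hB
  rw [hA', hB'] at h
  have h2 := congrArg Polynomial.roots h
  rw [Polynomial.roots_multiset_prod_X_sub_C, Polynomial.roots_multiset_prod_X_sub_C] at h2
  exact Multiset.map_injective Complex.ofReal_injective h2

private lemma aux_sqrt_congr {A B : Matrix n n ℂ} (h : A = B) (hA : A.PosSemidef)
    (hB : B.PosSemidef) : hA.sqrt = hB.sqrt := by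
  subst h; rfl

private lemma aux_trace_sqrt_re {A : Matrix n n ℂ} (hA : A.PosSemidef) :
    hA.sqrt.trace.re = ∑ i, Real.sqrt (hA.1.eigenvalues i) := by
  rw [aux_trace_sqrt hA, Complex.re_sum]
  simp

private lemma aux_traceNorm_conjTranspose (A : Matrix n n ℂ) :
    traceNorm Aᴴ = traceNorm A := by
  classical
  simp only [traceNorm_eq_sqrt]
  rw [aux_trace_sqrt_re, aux_trace_sqrt_re]
  have h1 : Aᴴᴴ * Aᴴ = A * Aᴴ := by rw [conjTranspose_conjTranspose]
  have hP : (A * Aᴴ).PosSemidef := posSemidef_self_mul_conjTranspose A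
  have hQ : (Aᴴ * A).PosSemidef := posSemidef_conjTranspose_mul_self A
  have heig : (posSemidef_conjTranspose_mul_self Aᴴ).1.eigenvalues
      = (h1 ▸ hP).1.eigenvalues := rfl
  have hms : Multiset.map (h1 ▸ hP : (Aᴴᴴ * Aᴴ).PosSemidef).1.eigenvalues Finset.univ.val
      = Multiset.map hQ.1.eigenvalues Finset.univ.val := by
    have hcp : (Aᴴᴴ * Aᴴ).charpoly = (Aᴴ * A).charpoly := by
      rw [h1]; exact aux_charpoly_mul_comm A Aᴴ
    exact aux_eig_multiset _ _ hcp
  have sum_eq : ∀ {B : Matrix n n ℂ} (hB : B.IsHermitian) (f : ℝ → ℝ),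
      ∑ i, f (hB.eigenvalues i)
        = ((Multiset.map hB.eigenvalues Finset.univ.val).map f).sum := by
    intro B hB f
    rw [Multiset.map_map]
    rfl
  rw [sum_eq ((posSemidef_conjTranspose_mul_self Aᴴ)).1 Real.sqrt,
    sum_eq ((posSemidef_conjTranspose_mul_self A)).1 Real.sqrt]
  rw [show (posSemidef_conjTranspose_mul_self Aᴴ).1.eigenvalues
      = (h1 ▸ hP : (Aᴴᴴ * Aᴴ).PosSemidef).1.eigenvalues from rfl, hms]

end Aux

/-- If `M` is a square complex matrix with `M² = 0`, then `‖M + Mᴴ‖₁ = 2‖M‖₁`. -/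
theorem traceNorm_add_conjTranspose_of_sq_eq_zero {n : Type*} [Fintype n] [DecidableEq n]
    (M : Matrix n n ℂ) (hM : M * M = 0) :
    traceNorm (M + Mᴴ) = 2 * traceNorm M := by
  classical
  set P : Matrix n n ℂ := M * Mᴴ with hPdef
  set Q : Matrix n n ℂ := Mᴴ * M with hQdef
  have hP : P.PosSemidef := posSemidef_self_mul_conjTranspose M
  have hQ : Q.PosSemidef := posSemidef_conjTranspose_mul_self M
  have hMH : Mᴴ * Mᴴ = 0 := by
    rw [← conjTranspose_mul, hM, conjTranspose_zero]
  have hPQ : P * Q = 0 := by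
    calc P * Q = M * (Mᴴ * Mᴴ) * M := by
          simp only [hPdef, hQdef, Matrix.mul_assoc]
      _ = 0 := by rw [hMH, Matrix.mul_zero, Matrix.zero_mul]
  -- sqrt orthogonality
  have hsP : hP.sqrt * Q = 0 := by
    rw [← Matrix.conjTranspose_mul_self_mul_eq_zero, hP.posSemidef_sqrt.1, hP.sqrt_mul_self]
    exact hPQ
  have hsPQ : hP.sqrt * hQ.sqrt = 0 := by
    have h0 : hP.sqrt * (hQ.sqrtᴴ * hQ.sqrt) = 0 := by
      rw [hQ.posSemidef_sqrt.1, hQ.sqrt_mul_self]; exact hsP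
    have := (Matrix.mul_conjTranspose_mul_self_eq_zero hQ.sqrt hP.sqrt).mp h0
    rwa [hQ.posSemidef_sqrt.1] at this
  have hsQP : hQ.sqrt * hP.sqrt = 0 := by
    have h0 := congrArg conjTranspose hsPQ
    rw [conjTranspose_mul, conjTranspose_zero, hP.posSemidef_sqrt.1, hQ.posSemidef_sqrt.1] at h0
    exact h0
  have hsum : (P + Q).PosSemidef := hP.add hQ
  have hsqrtsum : hsum.sqrt = hP.sqrt + hQ.sqrt := by
    refine ((hP.posSemidef_sqrt.add hQ.posSemidef_sqrt).eq_sqrt_of_sq_eq hsum ?_).symm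
    rw [pow_two, Matrix.add_mul, Matrix.mul_add, Matrix.mul_add, hsPQ, hsQP,
      hP.sqrt_mul_self, hQ.sqrt_mul_self]
    simp
  have key : (M + Mᴴ)ᴴ * (M + Mᴴ) = P + Q := by
    rw [conjTranspose_add, conjTranspose_conjTranspose, Matrix.add_mul, Matrix.mul_add,
      Matrix.mul_add, hM, hMH]
    simp [hPdef, hQdef, add_comm]
  have h1 : traceNorm (M + Mᴴ) = hsum.sqrt.trace.re := by
    simp only [traceNorm_eq_sqrt]
    rw [aux_sqrt_congr key (posSemidef_conjTranspose_mul_self (M + Mᴴ)) hsum]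
  have h2 : hP.sqrt.trace.re = traceNorm Mᴴ := by
    simp only [traceNorm_eq_sqrt]
    rw [aux_sqrt_congr (show Mᴴᴴ * Mᴴ = P by rw [conjTranspose_conjTranspose])
      (posSemidef_conjTranspose_mul_self Mᴴ) hP]
  have h3 : hQ.sqrt.trace.re = traceNorm M := rfl
  rw [h1, hsqrtsum, Matrix.trace_add, Complex.add_re, h2, h3,
    aux_traceNorm_conjTranspose M]
  ring
end

section
/- Let d ≥ 2, let d' = 2·⌊d/2⌋, let ε ∈ (0,1/2), let V₀ be the d×d (padded into D×d, D ≥ d) matrix equal to √(1−ε²) times the projection onto the first d' basis vectors plus (if d is odd) the rank-one term |d⟩⟨d|, and let Δ = i·(Σ_{j=1}^{⌊d/2⌋} |j⟩⟨j| − Σ_{j=⌊d/2⌋+1}^{d'} |j⟩⟨j|). Then for any unitary U of size d' (acting on the span of the first d' basis vectors and trivially elsewhere), the matrix V = V₀ + ε·U Δ U† satisfies V†V = I_d, i.e., V is an isometry. Moreover tr(V₀† Δ) = 0. -/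
open Matrix

private lemma sum_delta {d D : ℕ} (h : d ≤ D) (j : Fin d) (f : Fin D → ℂ) :
    (∑ i : Fin D, if (i : ℕ) = (j : ℕ) then f i else 0) = f (Fin.castLE h j) := by
  rw [Finset.sum_eq_single (Fin.castLE h j)]
  · simp
  · intro i _ hi
    rw [if_neg]
    exact fun hv => hi (Fin.ext (by simpa using hv))
  · intro h'; exact absurd (Finset.mem_univ _) h'

private lemma sum_castLE {d D : ℕ} (h : d ≤ D) (f : Fin D → ℂ)
    (hf : ∀ k : Fin D, d ≤ (k : ℕ) → f k = 0) :
    ∑ k : Fin D, f k = ∑ k : Fin d, f (Fin.castLE h k) := by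
  classical
  set g : ℕ → ℂ := fun k => if hk : k < D then f ⟨k, hk⟩ else 0 with hg
  have h1 : ∑ k : Fin D, f k = ∑ k ∈ Finset.range D, g k := by
    rw [← Fin.sum_univ_eq_sum_range g D]
    exact Finset.sum_congr rfl fun i _ => by simp [hg, i.isLt]
  have h2 : ∑ k : Fin d, f (Fin.castLE h k) = ∑ k ∈ Finset.range d, g k := by
    rw [← Fin.sum_univ_eq_sum_range g d]
    refine Finset.sum_congr rfl fun i _ => ?_
    have : (i : ℕ) < D := lt_of_lt_of_le i.isLt h
    simp [hg, this]
    rfl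
  rw [h1, h2]
  refine (Finset.sum_subset (Finset.range_subset_range.mpr h) fun x hx hx' => ?_).symm
  have hxD : x < D := Finset.mem_range.mp hx
  have hxd : d ≤ x := le_of_not_gt (fun hc => hx' (Finset.mem_range.mpr hc))
  simp [hg, hxD, hf ⟨x, hxD⟩ hxd]

/-- Type I hard-instance construction: with `d' = 2⌊d/2⌋`,
`V₀ = √(1−ε²)·Σ_{j<d'} |j⟩⟨j| (+ |d⟩⟨d| if d is odd)` and
`Δ = i(Σ_{j<⌊d/2⌋} |j⟩⟨j| − Σ_{⌊d/2⌋≤j<d'} |j⟩⟨j|)` (both padded to `D×d`),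
for any unitary `U` acting on the span of the first `d'` basis vectors and trivially
elsewhere, `V = V₀ + ε·UΔU†` is an isometry; moreover `tr(V₀ᴴΔ) = 0`. -/
theorem typeI_isometry (d D : ℕ) (hd : 2 ≤ d) (hdD : d ≤ D)
    (ε : ℝ) (hε0 : 0 < ε) (hε1 : ε < 1 / 2)
    (V₀ Δ : Matrix (Fin D) (Fin d) ℂ)
    (hV₀ : ∀ i j, V₀ i j = if (i : ℕ) = (j : ℕ) then
        (if (j : ℕ) < 2 * (d / 2) then (Real.sqrt (1 - ε ^ 2) : ℂ) else 1) else 0)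
    (hΔ : ∀ i j, Δ i j = if (i : ℕ) = (j : ℕ) then
        (if (j : ℕ) < d / 2 then Complex.I
         else if (j : ℕ) < 2 * (d / 2) then -Complex.I else 0) else 0)
    (U : Matrix (Fin D) (Fin D) ℂ) (hU : U ∈ Matrix.unitaryGroup (Fin D) ℂ)
    (hUtriv : ∀ i j : Fin D, (2 * (d / 2) ≤ (i : ℕ) ∨ 2 * (d / 2) ≤ (j : ℕ)) →
      U i j = if i = j then 1 else 0) :
    ((V₀ + (ε : ℂ) • (U * Δ * (U.submatrix (Fin.castLE hdD) (Fin.castLE hdD))ᴴ))ᴴ *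
        (V₀ + (ε : ℂ) • (U * Δ * (U.submatrix (Fin.castLE hdD) (Fin.castLE hdD))ᴴ)) = 1) ∧
    (V₀ᴴ * Δ).trace = 0 := by
  classical
  set n := d / 2 with hn
  have hnd : 2 * n ≤ d := by omega
  set Ud := U.submatrix (Fin.castLE hdD) (Fin.castLE hdD) with hUd
  set W := U * Δ * Udᴴ with hWdef
  -- the diagonal values
  set η : Fin d → ℂ := fun k => if (k : ℕ) < n then Complex.I
      else if (k : ℕ) < 2 * n then -Complex.I else 0 with hη
  set s : Fin d → ℝ := fun j => if (j : ℕ) < 2 * n then Real.sqrt (1 - ε ^ 2) else 1 with hs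
  have hΔ' : ∀ (m : Fin D) (k : Fin d), Δ m k = if (m : ℕ) = (k : ℕ) then η k else 0 := by
    intro m k; rw [hΔ]
  have hV₀' : ∀ (i : Fin D) (j : Fin d),
      V₀ i j = if (i : ℕ) = (j : ℕ) then ((s j : ℝ) : ℂ) else 0 := by
    intro i j; rw [hV₀]
    by_cases h : (j : ℕ) < 2 * n <;> simp [hs, h]
  have hε2 : (0:ℝ) ≤ 1 - ε ^ 2 := by nlinarith
  have hstarη : ∀ k, star (η k) = - η k := by
    intro k
    by_cases h1 : (k : ℕ) < n <;> by_cases h2 : (k : ℕ) < 2 * n <;> simp [hη, h1, h2]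
  have hU1 : Uᴴ * U = 1 := by
    have := (Matrix.mem_unitaryGroup_iff'.mp hU)
    simpa [Matrix.star_eq_conjTranspose] using this
  have hU2 : U * Uᴴ = 1 := by
    have := (Matrix.mem_unitaryGroup_iff.mp hU)
    simpa [Matrix.star_eq_conjTranspose] using this
  -- entrywise formula for W
  have hW : ∀ (j : Fin D) (l : Fin d), W j l =
      ∑ k : Fin d, U j (Fin.castLE hdD k) * η k *
        star (U (Fin.castLE hdD l) (Fin.castLE hdD k)) := by
    intro j l
    rw [hWdef, Matrix.mul_apply]
    refine Finset.sum_congr rfl fun k _ => ?_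
    rw [Matrix.conjTranspose_apply, hUd, Matrix.submatrix_apply, Matrix.mul_apply]
    congr 1
    have hterm : ∀ m : Fin D, U j m * Δ m k
        = if (m : ℕ) = (k : ℕ) then U j m * η k else 0 := fun m => by
      rw [hΔ']; split_ifs <;> simp
    rw [Finset.sum_congr rfl (fun m _ => hterm m), sum_delta hdD k]
  -- W vanishes on rows ≥ 2n
  have hWrow : ∀ (i : Fin D) (l : Fin d), 2 * n ≤ (i : ℕ) → W i l = 0 := by
    intro i l hi
    rw [hW]
    refine Finset.sum_eq_zero fun k _ => ?_
    by_cases hk : (k : ℕ) < 2 * n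
    · have hz : U i (Fin.castLE hdD k) = 0 := by
        rw [hUtriv _ _ (Or.inl hi), if_neg]
        intro h; subst h; simp at hi; omega
      rw [hz, zero_mul, zero_mul]
    · have hz : η k = 0 := by
        simp only [hη]
        rw [if_neg (by omega), if_neg (by omega)]
      rw [hz, mul_zero, zero_mul]
  have hWcol : ∀ (i : Fin D) (l : Fin d), 2 * n ≤ (l : ℕ) → W i l = 0 := by
    intro i l hl
    rw [hW]
    refine Finset.sum_eq_zero fun k _ => ?_
    by_cases hk : (k : ℕ) < 2 * n
    · have hz : U (Fin.castLE hdD l) (Fin.castLE hdD k) = 0 := by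
        rw [hUtriv _ _ (Or.inl (by simpa using hl)), if_neg]
        intro h
        have := congrArg Fin.val h
        simp at this; omega
      rw [hz, star_zero, mul_zero]
    · have hz : η k = 0 := by
        simp only [hη]
        rw [if_neg (by omega), if_neg (by omega)]
      rw [hz, mul_zero, zero_mul]
  -- antisymmetry
  have hWanti : ∀ (j l : Fin d),
      star (W (Fin.castLE hdD j) l) = - W (Fin.castLE hdD l) j := by
    intro j l
    rw [hW, hW, ← Finset.sum_neg_distrib, star_sum]
    refine Finset.sum_congr rfl fun k _ => ?_
    rw [StarMul.star_mul, StarMul.star_mul, star_star, hstarη k]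
    ring
  -- cross term vanishes
  have hcross : V₀ᴴ * W + Wᴴ * V₀ = 0 := by
    ext j l
    rw [Matrix.add_apply, Matrix.mul_apply, Matrix.mul_apply, Matrix.zero_apply]
    have e1 : (∑ i : Fin D, V₀ᴴ j i * W i l)
        = ((s j : ℝ) : ℂ) * W (Fin.castLE hdD j) l := by
      have hterm : ∀ i : Fin D, V₀ᴴ j i * W i l
          = if (i : ℕ) = (j : ℕ) then ((s j : ℝ) : ℂ) * W i l else 0 := fun i => by
        rw [Matrix.conjTranspose_apply, hV₀' i j]
        split_ifs <;> simp
      rw [Finset.sum_congr rfl (fun i _ => hterm i), sum_delta hdD j]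
    have e2 : (∑ i : Fin D, Wᴴ j i * V₀ i l)
        = star (W (Fin.castLE hdD l) j) * ((s l : ℝ) : ℂ) := by
      have hterm : ∀ i : Fin D, Wᴴ j i * V₀ i l
          = if (i : ℕ) = (l : ℕ) then star (W i j) * ((s l : ℝ) : ℂ) else 0 := fun i => by
        rw [Matrix.conjTranspose_apply, hV₀' i l]
        split_ifs <;> simp
      rw [Finset.sum_congr rfl (fun i _ => hterm i), sum_delta hdD l]
    rw [e1, e2, hWanti l j]
    by_cases hj : (j : ℕ) < 2 * n <;> by_cases hl : (l : ℕ) < 2 * n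
    · have hss : s j = s l := by simp [hs, hj, hl]
      rw [hss]; ring
    · rw [hWcol _ l (by omega)]; ring
    · rw [hWrow _ _ (show 2 * n ≤ ((Fin.castLE hdD j : Fin D) : ℕ) by simpa using (by omega : 2 * n ≤ (j : ℕ)))]
      ring
    · rw [hWrow _ _ (show 2 * n ≤ ((Fin.castLE hdD j : Fin D) : ℕ) by simpa using (by omega : 2 * n ≤ (j : ℕ)))]
      ring
  -- the "tail" projection
  set Q : Matrix (Fin d) (Fin d) ℂ :=
    Matrix.diagonal (fun j : Fin d => if 2 * n ≤ (j : ℕ) then 1 else 0) with hQ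
  have hUdUd : Ud * Udᴴ = 1 := by
    ext j l
    have h2 := congrFun (congrFun hU2 (Fin.castLE hdD j)) (Fin.castLE hdD l)
    rw [Matrix.mul_apply] at h2
    have hz : ∀ k : Fin D, d ≤ (k : ℕ) →
        U (Fin.castLE hdD j) k * Uᴴ k (Fin.castLE hdD l) = 0 := by
      intro k hk
      rw [hUtriv _ _ (Or.inr (by omega)), if_neg, zero_mul]
      intro h
      have hv := congrArg Fin.val h
      have := j.isLt
      simp at hv; omega
    rw [sum_castLE hdD _ hz] at h2
    rw [Matrix.mul_apply]
    have hlhs : ∀ k : Fin d, Ud j k * Udᴴ k l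
        = U (Fin.castLE hdD j) (Fin.castLE hdD k) *
          Uᴴ (Fin.castLE hdD k) (Fin.castLE hdD l) := fun k => by
      rw [hUd]; rfl
    rw [Finset.sum_congr rfl (fun k _ => hlhs k), h2]
    rw [Matrix.one_apply, Matrix.one_apply]
    by_cases hjl : j = l
    · subst hjl; simp
    · rw [if_neg, if_neg hjl]
      intro h
      exact hjl (Fin.castLE_injective hdD h)
  have hΔΔ : Δᴴ * Δ
      = Matrix.diagonal (fun k : Fin d => if (k : ℕ) < 2 * n then (1 : ℂ) else 0) := by
    ext j l
    rw [Matrix.mul_apply]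
    have hterm : ∀ i : Fin D, Δᴴ j i * Δ i l
        = if (i : ℕ) = (j : ℕ) then star (η j) * Δ i l else 0 := fun i => by
      rw [Matrix.conjTranspose_apply, hΔ' i j]
      split_ifs <;> simp
    rw [Finset.sum_congr rfl (fun i _ => hterm i), sum_delta hdD j, hΔ']
    by_cases hjl : j = l
    · subst hjl
      rw [Matrix.diagonal_apply_eq, if_pos (by simp), hstarη j]
      by_cases h1 : (j : ℕ) < n
      · simp [hη, h1, show (j : ℕ) < 2 * n by omega, Complex.I_mul_I]
      · by_cases h2 : (j : ℕ) < 2 * n <;> simp [hη, h1, h2, Complex.I_mul_I]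
    · have hne : ¬ ((Fin.castLE hdD j : Fin D) : ℕ) = (l : ℕ) := by
        simp only [Fin.coe_castLE]
        exact fun h => hjl (Fin.ext h)
      rw [if_neg hne, mul_zero, Matrix.diagonal_apply_ne _ hjl]
  have hWW : Wᴴ * W = 1 - Q := by
    have hWH : Wᴴ * W = Ud * (Δᴴ * Δ) * Udᴴ := by
      rw [hWdef]
      rw [Matrix.conjTranspose_mul, Matrix.conjTranspose_mul,
        Matrix.conjTranspose_conjTranspose]
      calc Ud * (Δᴴ * Uᴴ) * (U * Δ * Udᴴ)
          = Ud * (Δᴴ * ((Uᴴ * U) * (Δ * Udᴴ))) := by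
            simp only [Matrix.mul_assoc]
        _ = Ud * (Δᴴ * Δ) * Udᴴ := by
            rw [hU1, Matrix.one_mul]
            simp only [Matrix.mul_assoc]
    rw [hWH, hΔΔ]
    ext j l
    have hone := congrFun (congrFun hUdUd j) l
    rw [Matrix.mul_apply] at hone
    rw [Matrix.sub_apply, Matrix.mul_apply]
    have hsplit : ∀ k : Fin d,
        (Ud * Matrix.diagonal fun k : Fin d => if (k : ℕ) < 2 * n then (1 : ℂ) else 0) j k
          * Udᴴ k l
        = Ud j k * Udᴴ k l
          - (if 2 * n ≤ (k : ℕ) then (1 : ℂ) else 0) * (Ud j k * Udᴴ k l) := by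
      intro k
      rw [Matrix.mul_diagonal]
      by_cases hk : (k : ℕ) < 2 * n
      · rw [if_pos hk, if_neg (by omega)]; ring
      · rw [if_neg hk, if_pos (by omega)]; ring
    rw [Finset.sum_congr rfl (fun k _ => hsplit k), Finset.sum_sub_distrib, hone]
    congr 1
    have htail : ∀ k : Fin d,
        (if 2 * n ≤ (k : ℕ) then (1 : ℂ) else 0) * (Ud j k * Udᴴ k l)
        = if k = j then (if 2 * n ≤ (j : ℕ) ∧ l = j then (1 : ℂ) else 0) else 0 := by
      intro k
      by_cases hk : 2 * n ≤ (k : ℕ)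
      · have h1 : Ud j k = if j = k then 1 else 0 := by
          rw [hUd, Matrix.submatrix_apply, hUtriv _ _ (Or.inr (by simpa using hk))]
          simp [Fin.castLE_inj]
        have h2 : Udᴴ k l = if l = k then 1 else 0 := by
          rw [Matrix.conjTranspose_apply, hUd, Matrix.submatrix_apply,
            hUtriv _ _ (Or.inr (by simpa using hk))]
          simp [apply_ite (star : ℂ → ℂ), Fin.castLE_inj]
        rw [h1, h2, if_pos hk]
        by_cases hj : j = k
        · subst hj
          by_cases hl : l = j <;> simp [hl, hk]
        · rw [if_neg hj, if_neg (show ¬ k = j from fun h => hj h.symm)]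
          ring
      · rw [if_neg hk, zero_mul]
        by_cases hj : k = j
        · subst hj
          rw [if_pos rfl, if_neg (fun h => hk h.1)]
        · rw [if_neg hj]
    rw [Finset.sum_congr rfl (fun k _ => htail k),
      Finset.sum_ite_eq' Finset.univ j
        (fun _ => if 2 * n ≤ (j : ℕ) ∧ l = j then (1 : ℂ) else 0),
      if_pos (Finset.mem_univ j), hQ]
    by_cases hjl : l = j
    · subst hjl
      rw [Matrix.diagonal_apply_eq]
      by_cases h2 : 2 * n ≤ (l : ℕ)
      · rw [if_pos ⟨h2, rfl⟩, if_pos h2]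
      · rw [if_neg (fun h => h2 h.1), if_neg h2]
    · rw [if_neg (fun h => hjl h.2), Matrix.diagonal_apply_ne' _ hjl]
  have hVV : V₀ᴴ * V₀ = 1 - ((ε : ℂ) * (ε : ℂ)) • (1 - Q) := by
    ext j l
    rw [Matrix.mul_apply]
    have hterm : ∀ i : Fin D, V₀ᴴ j i * V₀ i l
        = if (i : ℕ) = (j : ℕ) then ((s j : ℝ) : ℂ) * V₀ i l else 0 := fun i => by
      rw [Matrix.conjTranspose_apply, hV₀' i j]
      split_ifs <;> simp
    rw [Finset.sum_congr rfl (fun i _ => hterm i), sum_delta hdD j, hV₀']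
    rw [Matrix.sub_apply, Matrix.smul_apply, Matrix.sub_apply, hQ, Matrix.one_apply]
    by_cases hjl : j = l
    · subst hjl
      rw [Matrix.diagonal_apply_eq,
        if_pos (show ((Fin.castLE hdD j : Fin D) : ℕ) = (j : ℕ) by simp), if_pos rfl]
      by_cases h2 : (j : ℕ) < 2 * n
      · have hsj : s j = Real.sqrt (1 - ε ^ 2) := by simp [hs, h2]
        rw [hsj, if_neg (by omega), ← Complex.ofReal_mul, Real.mul_self_sqrt hε2,
          smul_eq_mul]
        push_cast
        ring
      · have hsj : s j = 1 := by simp [hs, h2]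
        rw [hsj, if_pos (by omega), smul_eq_mul]
        push_cast
        ring
    · have hne : ¬ ((Fin.castLE hdD j : Fin D) : ℕ) = (l : ℕ) := by
        simp only [Fin.coe_castLE]
        exact fun h => hjl (Fin.ext h)
      rw [if_neg hne, mul_zero, if_neg hjl, Matrix.diagonal_apply_ne _ hjl]
      simp
  constructor
  · have expand : (V₀ + (ε : ℂ) • W)ᴴ * (V₀ + (ε : ℂ) • W) =
        V₀ᴴ * V₀ + (ε : ℂ) • (V₀ᴴ * W + Wᴴ * V₀) + ((ε : ℂ) * (ε : ℂ)) • (Wᴴ * W) := by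
      have hse : star ((ε : ℝ) : ℂ) = ((ε : ℝ) : ℂ) := by
        rw [Complex.star_def, Complex.conj_ofReal]
      rw [Matrix.conjTranspose_add, Matrix.conjTranspose_smul, hse]
      rw [Matrix.add_mul, Matrix.mul_add, Matrix.mul_add]
      simp only [Matrix.smul_mul, Matrix.mul_smul, smul_smul, smul_add]
      abel
    rw [expand, hcross, smul_zero, add_zero, hWW, hVV, sub_add_cancel]
  · set f : ℕ → ℂ := fun j => if j < n then (Real.sqrt (1 - ε ^ 2) : ℂ) * Complex.I
      else if j < 2 * n then -((Real.sqrt (1 - ε ^ 2) : ℂ) * Complex.I) else 0 with hf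
    have hdiag : ∀ j : Fin d, (V₀ᴴ * Δ) j j = f (j : ℕ) := by
      intro j
      rw [Matrix.mul_apply]
      have hterm : ∀ i : Fin D, V₀ᴴ j i * Δ i j
          = if (i : ℕ) = (j : ℕ) then ((s j : ℝ) : ℂ) * Δ i j else 0 := fun i => by
        rw [Matrix.conjTranspose_apply, hV₀' i j]
        split_ifs <;> simp
      rw [Finset.sum_congr rfl (fun i _ => hterm i), sum_delta hdD j, hΔ',
        if_pos (by simp)]
      by_cases h2 : (j : ℕ) < 2 * n
      · have hsj : s j = Real.sqrt (1 - ε ^ 2) := by simp [hs, h2]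
        by_cases h1 : (j : ℕ) < n
        · simp [hη, hf, hsj, h1, h2]
        · simp [hη, hf, hsj, h1, h2]
      · have h1 : ¬ (j : ℕ) < n := by omega
        simp [hη, hf, h1, h2]
    have h1 : (V₀ᴴ * Δ).trace = ∑ j ∈ Finset.range d, f j := by
      rw [Matrix.trace, ← Fin.sum_univ_eq_sum_range f d]
      exact Finset.sum_congr rfl fun j _ => hdiag j
    rw [h1]
    have h2 : ∑ j ∈ Finset.range d, f j = ∑ j ∈ Finset.range (2 * n), f j := by
      refine (Finset.sum_subset (Finset.range_subset_range.mpr hnd) fun x hx hx' => ?_).symm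
      have hx2 : ¬ x < 2 * n := fun h => hx' (Finset.mem_range.mpr h)
      simp only [hf]
      rw [if_neg (by omega), if_neg hx2]
    rw [h2, Finset.range_eq_Ico,
      ← Finset.sum_Ico_consecutive f (Nat.zero_le n) (by omega : n ≤ 2 * n)]
    have e1 : ∑ j ∈ Finset.Ico 0 n, f j
        = (n : ℂ) * ((Real.sqrt (1 - ε ^ 2) : ℂ) * Complex.I) := by
      have : ∀ j ∈ Finset.Ico 0 n, f j
          = (Real.sqrt (1 - ε ^ 2) : ℂ) * Complex.I := fun j hj => by
        have hjn := (Finset.mem_Ico.mp hj).2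
        simp [hf, hjn]
      rw [Finset.sum_congr rfl this, Finset.sum_const, Nat.card_Ico, Nat.sub_zero,
        nsmul_eq_mul]
    have e2 : ∑ j ∈ Finset.Ico n (2 * n), f j
        = (n : ℂ) * (-((Real.sqrt (1 - ε ^ 2) : ℂ) * Complex.I)) := by
      have : ∀ j ∈ Finset.Ico n (2 * n), f j
          = -((Real.sqrt (1 - ε ^ 2) : ℂ) * Complex.I) := fun j hj => by
        have hj1 := (Finset.mem_Ico.mp hj).1
        have hj2 := (Finset.mem_Ico.mp hj).2
        simp only [hf]
        rw [if_neg (by omega), if_pos hj2]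
      rw [Finset.sum_congr rfl this, Finset.sum_const, Nat.card_Ico, nsmul_eq_mul]
      congr 1
      push_cast [show 2 * n - n = n by omega]
      ring
    rw [e1, e2]
    ring
end

section
/- Let n ≥ m be positive integers, let H ≅ ℂ^d with orthonormal basis {|0⟩,…,|d−1⟩}, and let Π be a subspace of span{|1⟩,…,|d−1⟩} (hence orthogonal to |0⟩). Define A as the linear span in H^{⊗n} of all vectors Σ_{S⊆[n], |S|=m} |ψ⟩^{⊗S} ⊗ |0⟩^{⊗([n]∖S)} as |ψ⟩ ranges over Π, where |ψ⟩^{⊗S}⊗|0⟩^{⊗([n]∖S)} denotes the product vector with |ψ⟩ at positions in S and |0⟩ elsewhere. Then dim(A) = C(dim(Π) + m − 1, m). -/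
open Finset

namespace DimSymSpanAux

variable {n m d : ℕ}

/-- `m`-fold tensor power of `ψ`, as a function on basis labels. -/
def tpow (m : ℕ) {d : ℕ} (ψ : Fin d → ℂ) : (Fin m → Fin d) → ℂ := fun f₀ => ∏ i, ψ (f₀ i)

/-- Extend a label function on `Fin m` to `Fin n` by `z`. -/
def extFun (hmn : m ≤ n) (z : Fin d) (f₀ : Fin m → Fin d) : Fin n → Fin d :=
  fun i => if h : (i : ℕ) < m then f₀ ⟨i, h⟩ else z

/-- The symmetrized generator. -/
noncomputable def gen (n m : ℕ) {d : ℕ} (z : Fin d) (ψ : Fin d → ℂ) : (Fin n → Fin d) → ℂ :=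
  ∑ S ∈ Finset.univ.filter (fun S : Finset (Fin n) => S.card = m),
    fun f : Fin n → Fin d => (∏ i ∈ S, ψ (f i)) * ∏ i ∈ Sᶜ, (if f i = z then (1:ℂ) else 0)

lemma gen_apply (z : Fin d) (ψ : Fin d → ℂ) (f : Fin n → Fin d) :
    gen n m z ψ f = ∑ S ∈ Finset.univ.filter (fun S : Finset (Fin n) => S.card = m),
      (∏ i ∈ S, ψ (f i)) * ∏ i ∈ Sᶜ, (if f i = z then (1:ℂ) else 0) := by
  simp [gen]

/-- first m indices -/
def S₀ (hmn : m ≤ n) : Finset (Fin n) := (Finset.univ : Finset (Fin m)).map (Fin.castLEEmb hmn)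

lemma mem_S₀ (hmn : m ≤ n) (i : Fin n) : i ∈ S₀ hmn ↔ (i : ℕ) < m := by
  simp only [S₀, Finset.mem_map, Finset.mem_univ, true_and]
  constructor
  · rintro ⟨a, rfl⟩; exact a.2
  · intro h; exact ⟨⟨i, h⟩, rfl⟩

lemma card_S₀ (hmn : m ≤ n) : (S₀ hmn).card = m := by
  simp [S₀]

lemma gen_eq_zero (z : Fin d) (ψ : Fin d → ℂ) (hz : ψ z = 0) (f : Fin n → Fin d)
    (hf : (Finset.univ.filter (fun i => f i ≠ z)).card ≠ m) : gen n m z ψ f = 0 := by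
  rw [gen_apply]
  refine Finset.sum_eq_zero fun S hS => ?_
  rw [Finset.mem_filter] at hS
  by_cases hA : ∀ i ∈ S, f i ≠ z
  · by_cases hB : ∀ i ∈ Sᶜ, f i = z
    · exfalso
      apply hf
      have : Finset.univ.filter (fun i => f i ≠ z) = S := by
        ext i
        simp only [Finset.mem_filter, Finset.mem_univ, true_and]
        constructor
        · intro h
          by_contra hi
          exact h (hB i (Finset.mem_compl.2 hi))
        · intro h; exact hA i h
      rw [this, hS.2]
    · push_neg at hB
      obtain ⟨i, hi, hfi⟩ := hB
      rw [Finset.prod_eq_zero hi (if_neg hfi : (if f i = z then (1:ℂ) else 0) = 0), mul_zero]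
  · push_neg at hA
    obtain ⟨i, hi, hfi⟩ := hA
    rw [Finset.prod_eq_zero hi (by rw [hfi, hz]), zero_mul]

lemma gen_perm (z : Fin d) (ψ : Fin d → ℂ) (σ : Equiv.Perm (Fin n)) (f : Fin n → Fin d) :
    gen n m z ψ (f ∘ σ) = gen n m z ψ f := by
  rw [gen_apply, gen_apply]
  refine Finset.sum_nbij' (fun S => S.image σ) (fun S => S.image σ.symm) ?_ ?_ ?_ ?_ ?_
  · intro S hS
    rw [Finset.mem_filter] at hS ⊢
    exact ⟨Finset.mem_univ _, by rw [Finset.card_image_of_injective _ σ.injective, hS.2]⟩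
  · intro S hS
    rw [Finset.mem_filter] at hS ⊢
    exact ⟨Finset.mem_univ _, by rw [Finset.card_image_of_injective _ σ.symm.injective, hS.2]⟩
  · intro S _
    simp [Finset.image_image, Function.comp_def]
  · intro S _
    simp [Finset.image_image, Function.comp_def]
  · intro S _
    have himg : (S.image σ)ᶜ = Sᶜ.image σ := by
      ext j
      simp only [Finset.mem_compl, Finset.mem_image]
      constructor
      · intro h
        exact ⟨σ.symm j, fun hc => h ⟨_, hc, by simp⟩, by simp⟩
      · rintro ⟨i, hi, rfl⟩ ⟨i', hi', hii'⟩
        rw [σ.injective hii'] at hi'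
        exact hi hi'
    rw [himg, Finset.prod_image (fun a _ b _ h => σ.injective h),
      Finset.prod_image (fun a _ b _ h => σ.injective h)]
    rfl

/-- Restriction map: precomposition with `extFun`. -/
noncomputable def resMap (hmn : m ≤ n) (z : Fin d) :
    ((Fin n → Fin d) → ℂ) →ₗ[ℂ] ((Fin m → Fin d) → ℂ) :=
  LinearMap.funLeft ℂ ℂ (extFun hmn z)

lemma resMap_apply (hmn : m ≤ n) (z : Fin d) (v : (Fin n → Fin d) → ℂ) (f₀ : Fin m → Fin d) :
    resMap hmn z v f₀ = v (extFun hmn z f₀) := rfl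

lemma resMap_gen (hmn : m ≤ n) (z : Fin d) (ψ : Fin d → ℂ) (hz : ψ z = 0) :
    resMap hmn z (gen n m z ψ) = tpow m ψ := by
  funext f₀
  rw [resMap_apply, gen_apply]
  have hS₀mem : S₀ hmn ∈ Finset.univ.filter (fun S : Finset (Fin n) => S.card = m) := by
    simp [card_S₀ hmn]
  rw [Finset.sum_eq_single_of_mem (S₀ hmn) hS₀mem]
  · have h2 : ∀ i ∈ (S₀ hmn)ᶜ, (if extFun hmn z f₀ i = z then (1:ℂ) else 0) = 1 := by
      intro i hi
      rw [Finset.mem_compl, mem_S₀] at hi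
      rw [if_pos]
      simp [extFun, hi]
    rw [Finset.prod_congr rfl h2, Finset.prod_const_one, mul_one]
    unfold S₀
    rw [Finset.prod_map]
    refine Finset.prod_congr rfl fun i₀ _ => ?_
    have : ((Fin.castLEEmb hmn) i₀ : ℕ) < m := i₀.2
    simp only [extFun, dif_pos this]
    congr 1
  · intro S hS hne
    rw [Finset.mem_filter] at hS
    have : ¬ S ⊆ S₀ hmn := by
      intro hsub
      exact hne (Finset.eq_of_subset_of_card_le hsub (by rw [hS.2, card_S₀]))
    obtain ⟨i, hiS, hi₀⟩ := Finset.not_subset.1 this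
    have : extFun hmn z f₀ i = z := by
      rw [mem_S₀] at hi₀
      simp [extFun, hi₀]
    rw [Finset.prod_eq_zero hiS (by rw [this, hz]), zero_mul]

/-- Every element of the span is permutation-invariant and supported on card-m label functions. -/
lemma span_prop (z : Fin d) (P₀ : Submodule ℂ (Fin d → ℂ)) (hP₀ : ∀ ψ ∈ P₀, ψ z = 0)
    (x : (Fin n → Fin d) → ℂ)
    (hx : x ∈ Submodule.span ℂ {v : (Fin n → Fin d) → ℂ | ∃ ψ ∈ P₀, v = gen n m z ψ}) :
    (∀ (σ : Equiv.Perm (Fin n)) (f : Fin n → Fin d), x (f ∘ σ) = x f) ∧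
      (∀ f : Fin n → Fin d,
        (Finset.univ.filter (fun i => f i ≠ z)).card ≠ m → x f = 0) := by
  refine Submodule.span_induction ?_ ?_ ?_ ?_ hx
  · rintro v ⟨ψ, hψ, rfl⟩
    exact ⟨fun σ f => gen_perm z ψ σ f, fun f hf => gen_eq_zero z ψ (hP₀ ψ hψ) f hf⟩
  · exact ⟨fun σ f => rfl, fun f _ => rfl⟩
  · rintro u v _ _ ⟨hu1, hu2⟩ ⟨hv1, hv2⟩
    exact ⟨fun σ f => by simp [hu1 σ f, hv1 σ f],
      fun f hf => by simp [Pi.add_apply, hu2 f hf, hv2 f hf]⟩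
  · rintro a u _ ⟨hu1, hu2⟩
    exact ⟨fun σ f => by simp [hu1 σ f], fun f hf => by simp [Pi.smul_apply, hu2 f hf]⟩

lemma resMap_inj_on_span (hmn : m ≤ n) (z : Fin d) (P₀ : Submodule ℂ (Fin d → ℂ))
    (hP₀ : ∀ ψ ∈ P₀, ψ z = 0) (x : (Fin n → Fin d) → ℂ)
    (hx : x ∈ Submodule.span ℂ {v : (Fin n → Fin d) → ℂ | ∃ ψ ∈ P₀, v = gen n m z ψ})
    (hres : resMap hmn z x = 0) : x = 0 := by
  obtain ⟨hperm, hsupp⟩ := span_prop z P₀ hP₀ x hx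
  funext f
  by_cases hcard : (Finset.univ.filter (fun i => f i ≠ z)).card = m
  · -- build a permutation moving the support to the first m positions
    set s : Finset (Fin n) := Finset.univ.filter (fun i => f i ≠ z) with hs
    have hc : Fintype.card {i // i ∈ S₀ hmn} = Fintype.card {i // i ∈ s} := by
      simp only [Fintype.card_coe]
      rw [card_S₀ hmn, hcard]
    let e : {i // i ∈ S₀ hmn} ≃ {i // i ∈ s} := Fintype.equivOfCardEq hc
    let σ : Equiv.Perm (Fin n) := e.extendSubtype
    have hσ : ∀ i : Fin n, ¬ (i : ℕ) < m → f (σ i) = z := by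
      intro i hi
      have hiS : i ∉ S₀ hmn := fun h => hi ((mem_S₀ hmn i).1 h)
      have := e.extendSubtype_not_mem i hiS
      by_contra hne
      exact this (by simp [hs]; exact hne)
    have hext : f ∘ σ = extFun hmn z (fun i₀ : Fin m => (f ∘ σ) (Fin.castLE hmn i₀)) := by
      funext i
      by_cases hi : (i : ℕ) < m
      · simp only [extFun, dif_pos hi]
        congr 1
      · simp only [extFun, dif_neg hi]
        exact hσ i hi
    have : x f = x (f ∘ σ) := (hperm σ f).symm
    rw [this, hext]
    have : x (extFun hmn z fun i₀ : Fin m => (f ∘ ⇑σ) (Fin.castLE hmn i₀))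
        = resMap hmn z x (fun i₀ : Fin m => (f ∘ ⇑σ) (Fin.castLE hmn i₀)) := rfl
    rw [this, hres]
    rfl
  · rw [hsupp f hcard]
    rfl

section SymPart

variable {m k d : ℕ}

/-- elementary tensor of basis elements -/
def W (m : ℕ) {k d : ℕ} (B : Fin k → Fin d → ℂ) (g : Fin m → Fin k) : (Fin m → Fin d) → ℂ :=
  fun f₀ => ∏ i, B (g i) (f₀ i)

/-- multiset of values of `g` -/
def symOf {m k : ℕ} (g : Fin m → Fin k) : Sym (Fin k) m :=
  ⟨Multiset.map g Finset.univ.val, by simp⟩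

lemma symOf_surjective (m k : ℕ) :
    Function.Surjective (symOf : (Fin m → Fin k) → Sym (Fin k) m) := by
  rintro ⟨s, hs⟩
  set l : List (Fin k) := s.toList with hl
  have hlen : l.length = m := by rw [hl, Multiset.length_toList]; exact hs
  subst hlen
  refine ⟨l.get, ?_⟩
  apply Subtype.ext
  show Multiset.map l.get Finset.univ.val = s
  rw [Fin.univ_val_map]
  rw [show List.ofFn l.get = l from List.ofFn_get l]
  rw [hl, Multiset.coe_toList]

/-- symmetrized basis tensor -/
noncomputable def w (m : ℕ) {k d : ℕ} (B : Fin k → Fin d → ℂ) (μ : Sym (Fin k) m) :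
    (Fin m → Fin d) → ℂ :=
  ∑ g ∈ Finset.univ.filter (fun g : Fin m → Fin k => symOf g = μ), W m B g

lemma prod_comp_count (c : Fin k → ℂ) (g : Fin m → Fin k) :
    ∏ i, c (g i) = ∏ j, c j ^ (Multiset.map g Finset.univ.val).count j := by
  have h1 : ∏ i, c (g i) = ((Multiset.map g Finset.univ.val).map c).prod := by
    rw [Multiset.map_map]
    rfl
  rw [h1, Finset.prod_multiset_map_count]
  refine Finset.prod_subset (Finset.subset_univ _) ?_
  intro j _ hj
  rw [Multiset.count_eq_zero_of_notMem (by simpa using hj), pow_zero]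

lemma tpow_expand (B : Fin k → Fin d → ℂ) (c : Fin k → ℂ) :
    tpow m (∑ j, c j • B j) =
      ∑ μ : Sym (Fin k) m,
        (∏ j, c j ^ (μ : Multiset (Fin k)).count j) • w m B μ := by
  funext f₀
  have lhs : tpow m (∑ j, c j • B j) f₀
      = ∑ g : Fin m → Fin k, ∏ i, (c (g i) * B (g i) (f₀ i)) := by
    show (∏ i, (∑ j, c j • B j) (f₀ i)) = _
    have : ∀ i, (∑ j, c j • B j) (f₀ i) = ∑ j, c j * B j (f₀ i) := by
      intro i; simp [Finset.sum_apply]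
    rw [Finset.prod_congr rfl (fun i _ => this i)]
    exact Fintype.prod_sum (fun i j => c j * B j (f₀ i))
  rw [lhs]
  have rhs : (∑ μ : Sym (Fin k) m,
        (∏ j, c j ^ (μ : Multiset (Fin k)).count j) • w m B μ) f₀
      = ∑ μ : Sym (Fin k) m, ∑ g ∈ Finset.univ.filter (fun g : Fin m → Fin k => symOf g = μ),
          ∏ i, (c (g i) * B (g i) (f₀ i)) := by
    rw [Finset.sum_apply]
    refine Finset.sum_congr rfl fun μ _ => ?_
    rw [Pi.smul_apply, smul_eq_mul]
    show (∏ j, c j ^ (μ : Multiset (Fin k)).count j) *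
        (∑ g ∈ Finset.univ.filter (fun g : Fin m → Fin k => symOf g = μ), W m B g) f₀ = _
    rw [Finset.sum_apply, Finset.mul_sum]
    refine Finset.sum_congr rfl fun g hg => ?_
    rw [Finset.mem_filter] at hg
    have hcnt : (μ : Multiset (Fin k)) = Multiset.map g Finset.univ.val := by
      rw [← hg.2]; rfl
    rw [hcnt, ← prod_comp_count c g]
    show (∏ i, c (g i)) * (∏ i, B (g i) (f₀ i)) = _
    rw [← Finset.prod_mul_distrib]
  rw [rhs, Finset.sum_fiberwise]

variable (B : Fin k → Fin d → ℂ) (φ : Fin k → ((Fin d → ℂ) →ₗ[ℂ] ℂ))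

/-- dual functional picking out the coefficient of `W m B h` -/
noncomputable def dualFun (h : Fin m → Fin k) : ((Fin m → Fin d) → ℂ) →ₗ[ℂ] ℂ :=
  ∑ f₀ : Fin m → Fin d, (∏ i, φ (h i) (Pi.single (f₀ i) 1)) • LinearMap.proj f₀

lemma dualFun_apply (h : Fin m → Fin k) (v : (Fin m → Fin d) → ℂ) :
    dualFun φ h v = ∑ f₀ : Fin m → Fin d, (∏ i, φ (h i) (Pi.single (f₀ i) 1)) * v f₀ := by
  simp [dualFun, LinearMap.sum_apply]

variable (hφ : ∀ j j', φ j (B j') = if j' = j then 1 else 0)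

include hφ in
lemma dualFun_W (h g : Fin m → Fin k) :
    dualFun φ h (W m B g) = if g = h then 1 else 0 := by
  rw [dualFun_apply]
  have step : ∀ f₀ : Fin m → Fin d,
      (∏ i, φ (h i) (Pi.single (f₀ i) 1)) * W m B g f₀
        = ∏ i, (φ (h i) (Pi.single (f₀ i) 1) * B (g i) (f₀ i)) := by
    intro f₀
    show (∏ i, φ (h i) (Pi.single (f₀ i) 1)) * (∏ i, B (g i) (f₀ i)) = _
    rw [← Finset.prod_mul_distrib]
  rw [Finset.sum_congr rfl (fun f₀ _ => step f₀),
    ← Fintype.prod_sum (fun i a => φ (h i) (Pi.single a 1) * B (g i) a)]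
  have hfactor : ∀ i, (∑ a, φ (h i) (Pi.single a 1) * B (g i) a)
      = if g i = h i then 1 else 0 := by
    intro i
    have := LinearMap.pi_apply_eq_sum_univ (φ (h i)) (B (g i))
    rw [← hφ (h i) (g i), this]
    refine Finset.sum_congr rfl fun a _ => ?_
    have hsingle : (Pi.single a 1 : Fin d → ℂ) = fun j => if a = j then 1 else 0 := by
      funext j
      simp [Pi.single_apply, eq_comm]
    rw [hsingle, smul_eq_mul, mul_comm]
  rw [Finset.prod_congr rfl (fun i _ => hfactor i)]
  by_cases hgh : g = h
  · subst hgh; simp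
  · obtain ⟨i, hi⟩ := Function.ne_iff.1 hgh
    rw [if_neg hgh]
    exact Finset.prod_eq_zero (Finset.mem_univ i)
      (if_neg hi : (if g i = h i then (1:ℂ) else 0) = 0)

include hφ in
lemma dualFun_w (h : Fin m → Fin k) (μ : Sym (Fin k) m) :
    dualFun φ h (w m B μ) = if symOf h = μ then 1 else 0 := by
  rw [w, map_sum]
  rw [Finset.sum_congr rfl (fun g hg => dualFun_W B φ hφ h g)]
  rw [Finset.sum_ite_eq' (Finset.univ.filter (fun g : Fin m → Fin k => symOf g = μ)) h
    (fun _ => (1 : ℂ))]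
  simp

include hφ in
lemma w_li : LinearIndependent ℂ (w m B) := by
  rw [Fintype.linearIndependent_iff]
  intro a ha μ
  obtain ⟨h, rfl⟩ := symOf_surjective m k μ
  have := congrArg (dualFun φ h) ha
  rw [map_sum, map_zero] at this
  have h2 : ∀ μ' : Sym (Fin k) m, dualFun φ h (a μ' • w m B μ')
      = if symOf h = μ' then a μ' else 0 := by
    intro μ'
    rw [map_smul, dualFun_w B φ hφ, smul_eq_mul, mul_ite, mul_one, mul_zero]
  rw [Finset.sum_congr rfl (fun μ' _ => h2 μ'), Finset.sum_ite_eq] at this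
  simpa using this

end SymPart

lemma finrank_span_tpow (m d : ℕ) (P₀ : Submodule ℂ (Fin d → ℂ)) :
    Module.finrank ℂ (Submodule.span ℂ
        {v : (Fin m → Fin d) → ℂ | ∃ ψ ∈ P₀, v = tpow m ψ})
      = (Module.finrank ℂ P₀ + m - 1).choose m := by
  classical
  set k := Module.finrank ℂ P₀ with hk
  let b : Module.Basis (Fin k) ℂ P₀ := Module.finBasis ℂ P₀
  let B : Fin k → Fin d → ℂ := fun j => (b j : Fin d → ℂ)
  have hBmem : ∀ j, B j ∈ P₀ := fun j => (b j).2
  obtain ⟨g0, hg0⟩ := (P₀.subtype).exists_leftInverse_of_injective P₀.ker_subtype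
  let φ : Fin k → ((Fin d → ℂ) →ₗ[ℂ] ℂ) := fun j => (b.coord j).comp g0
  have hφ : ∀ j j', φ j (B j') = if j' = j then 1 else 0 := by
    intro j j'
    have h1 : g0 (B j') = b j' := by
      have := LinearMap.congr_fun hg0 (b j')
      simpa using this
    show b.coord j (g0 (B j')) = _
    rw [h1, Module.Basis.coord_apply, b.repr_self, Finsupp.single_apply]
  -- span equality
  have hspan : Submodule.span ℂ {v : (Fin m → Fin d) → ℂ | ∃ ψ ∈ P₀, v = tpow m ψ}
      = Submodule.span ℂ (Set.range (w m B)) := by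
    apply le_antisymm
    · rw [Submodule.span_le]
      rintro v ⟨ψ, hψ, rfl⟩
      have hψeq : ψ = ∑ j, b.repr ⟨ψ, hψ⟩ j • B j := by
        have h2 := congrArg (Subtype.val) (b.sum_repr ⟨ψ, hψ⟩)
        rw [show (Subtype.val (⟨ψ, hψ⟩ : P₀)) = ψ from rfl] at h2
        have h3 : (Subtype.val (∑ i : Fin k, b.repr ⟨ψ, hψ⟩ i • b i))
            = ∑ j, b.repr ⟨ψ, hψ⟩ j • B j := by rw [Submodule.coe_sum]; rfl
        rw [eq_comm, ← h3]
        exact h2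
      rw [hψeq, tpow_expand]
      exact Submodule.sum_mem _ fun μ _ => Submodule.smul_mem _ _
        (Submodule.subset_span ⟨μ, rfl⟩)
    · rw [Submodule.span_le]
      rintro v ⟨μ, rfl⟩
      rw [SetLike.mem_coe, ← Subspace.forall_mem_dualAnnihilator_apply_eq_zero_iff]
      intro ξ hξ
      rw [Submodule.mem_dualAnnihilator] at hξ
      have hz : ∀ c : Fin k → ℂ,
          ∑ μ' : Sym (Fin k) m,
            (∏ j, c j ^ (μ' : Multiset (Fin k)).count j) * ξ (w m B μ') = 0 := by
        intro c
        have hmem : tpow m (∑ j, c j • B j) ∈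
            Submodule.span ℂ {v : (Fin m → Fin d) → ℂ | ∃ ψ ∈ P₀, v = tpow m ψ} :=
          Submodule.subset_span ⟨∑ j, c j • B j,
            Submodule.sum_mem _ fun j _ => Submodule.smul_mem _ _ (hBmem j), rfl⟩
        have h0 := hξ _ hmem
        rw [tpow_expand, map_sum] at h0
        rw [← h0]
        exact Finset.sum_congr rfl fun μ' _ => by rw [map_smul, smul_eq_mul]
      -- polynomial argument
      let p : MvPolynomial (Fin k) ℂ := ∑ μ' : Sym (Fin k) m,
        MvPolynomial.monomial (Multiset.toFinsupp (μ' : Multiset (Fin k))) (ξ (w m B μ'))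
      have heval : ∀ c : Fin k → ℂ, MvPolynomial.eval c p = 0 := by
        intro c
        rw [show p = ∑ μ' : Sym (Fin k) m,
          MvPolynomial.monomial (Multiset.toFinsupp (μ' : Multiset (Fin k)))
            (ξ (w m B μ')) from rfl, map_sum, ← hz c]
        refine Finset.sum_congr rfl fun μ' _ => ?_
        rw [MvPolynomial.eval_monomial, Finsupp.prod_pow, mul_comm]
        simp [Multiset.toFinsupp_apply]
      have hp0 : p = 0 := MvPolynomial.funext (by simpa using heval)
      have hcoeff := congrArg
        (MvPolynomial.coeff (Multiset.toFinsupp (μ : Multiset (Fin k)))) hp0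
      rw [MvPolynomial.coeff_zero] at hcoeff
      rw [show p = ∑ μ' : Sym (Fin k) m,
        MvPolynomial.monomial (Multiset.toFinsupp (μ' : Multiset (Fin k)))
          (ξ (w m B μ')) from rfl, MvPolynomial.coeff_sum] at hcoeff
      have hsingle : ∀ μ' : Sym (Fin k) m,
          MvPolynomial.coeff (Multiset.toFinsupp (μ : Multiset (Fin k)))
            (MvPolynomial.monomial (Multiset.toFinsupp (μ' : Multiset (Fin k)))
              (ξ (w m B μ')))
          = if μ' = μ then ξ (w m B μ') else 0 := by
        intro μ'
        rw [MvPolynomial.coeff_monomial]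
        congr 1
        simp only [eq_iff_iff]
        constructor
        · intro h
          have := Multiset.toFinsupp.injective h
          exact Subtype.ext this
        · rintro rfl; rfl
      rw [Finset.sum_congr rfl fun μ' _ => hsingle μ', Finset.sum_ite_eq'] at hcoeff
      simpa using hcoeff
  rw [hspan, finrank_span_eq_card (w_li B φ hφ), Sym.card_sym_eq_choose,
    Fintype.card_fin]

end DimSymSpanAux


/-- Model `H^{⊗n}` with `H = ℂ^d` as functions `(Fin n → Fin d) → ℂ` on basis labels.
Let `P₀` be a subspace of `span{|1⟩,…,|d−1⟩}` (i.e. every vector vanishes at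
coordinate `0`).  Let `A` be the span of the symmetrized vectors
`Σ_{|S|=m} |ψ⟩^{⊗S} ⊗ |0⟩^{⊗([n]∖S)}` for `ψ ∈ P₀`.
Then `dim A = C(dim P₀ + m − 1, m)`. -/
theorem dim_symmetrized_span (n m d : ℕ) (hm : 0 < m) (hmn : m ≤ n) (hd : 0 < d)
    (P₀ : Submodule ℂ (Fin d → ℂ)) (hP₀ : ∀ ψ ∈ P₀, ψ ⟨0, hd⟩ = 0) :
    Module.finrank ℂ
        (Submodule.span ℂ {v : (Fin n → Fin d) → ℂ |
          ∃ ψ ∈ P₀, v = ∑ S ∈ Finset.univ.filter (fun S : Finset (Fin n) => S.card = m),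
            fun f : Fin n → Fin d =>
              (∏ i ∈ S, ψ (f i)) * ∏ i ∈ Sᶜ, (if f i = ⟨0, hd⟩ then (1 : ℂ) else 0)}) =
      Nat.choose (Module.finrank ℂ P₀ + m - 1) m := by
  classical
  show Module.finrank ℂ
      (Submodule.span ℂ
        {v : (Fin n → Fin d) → ℂ | ∃ ψ ∈ P₀, v = DimSymSpanAux.gen n m ⟨0, hd⟩ ψ}) = _
  set A := Submodule.span ℂ
    {v : (Fin n → Fin d) → ℂ | ∃ ψ ∈ P₀, v = DimSymSpanAux.gen n m ⟨0, hd⟩ ψ} with hA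
  let Φ := DimSymSpanAux.resMap (d := d) hmn ⟨0, hd⟩
  have hinj : Function.Injective (Φ.domRestrict A) := by
    rw [← LinearMap.ker_eq_bot, Submodule.eq_bot_iff]
    rintro ⟨x, hx⟩ hker
    have hres : Φ x = 0 := hker
    have hx0 : x = 0 :=
      DimSymSpanAux.resMap_inj_on_span hmn ⟨0, hd⟩ P₀ hP₀ x hx hres
    exact Subtype.ext hx0
  have h1 : Module.finrank ℂ A
      = Module.finrank ℂ (LinearMap.range (Φ.domRestrict A)) :=
    (LinearMap.finrank_range_of_inj hinj).symm
  rw [h1, LinearMap.range_domRestrict]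
  have hmap : A.map Φ = Submodule.span ℂ
      {v : (Fin m → Fin d) → ℂ | ∃ ψ ∈ P₀, v = DimSymSpanAux.tpow m ψ} := by
    rw [hA, Submodule.map_span]
    congr 1
    ext v
    constructor
    · rintro ⟨u, ⟨ψ, hψ, rfl⟩, rfl⟩
      exact ⟨ψ, hψ, DimSymSpanAux.resMap_gen hmn ⟨0, hd⟩ ψ (hP₀ ψ hψ)⟩
    · rintro ⟨ψ, hψ, rfl⟩
      exact ⟨_, ⟨ψ, hψ, rfl⟩, DimSymSpanAux.resMap_gen hmn ⟨0, hd⟩ ψ (hP₀ ψ hψ)⟩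
  rw [hmap, DimSymSpanAux.finrank_span_tpow]
end

section
/- Let d₁, d₂, r be positive integers with d₁/d₂ ≤ r ≤ d₁·d₂. Then there exist linear operators K₁,…,K_r: ℂ^{d₁} → ℂ^{d₂} such that: (1) tr(Kᵢ† Kⱼ) = 0 for all i ≠ j; (2) tr(Kᵢ† Kᵢ) ≤ 2d₁/r for all i; and (3) Σᵢ Kᵢ† Kᵢ = I_{d₁}. -/
open Matrix ComplexOrder

lemma trace_formula {m n : ℕ} (A B : Matrix (Fin m) (Fin n) ℂ) :
    (Aᴴ * B).trace = ∑ y, ∑ x, (starRingEnd ℂ) (A x y) * B x y := by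
  simp [Matrix.trace, Matrix.mul_apply, Matrix.conjTranspose_apply, Matrix.diag]

lemma fin_val_cond {n a : ℕ} (ha : a < n) (x : Fin n) :
    (x.val = a) = (x = ⟨a, ha⟩) := by
  rw [eq_iff_iff, Fin.ext_iff]

/-- For positive integers `d₁, d₂, r` with `d₁/d₂ ≤ r ≤ d₁·d₂`, there exist
operators `K₁,…,K_r : ℂ^{d₁} → ℂ^{d₂}` that are pairwise trace-orthogonal,
each with `tr(Kᵢᴴ Kᵢ) ≤ 2d₁/r`, and with `Σᵢ Kᵢᴴ Kᵢ = I`. -/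
theorem exists_balanced_orthogonal_kraus (d₁ d₂ r : ℕ)
    (hd₁ : 0 < d₁) (hd₂ : 0 < d₂) (hr : 0 < r)
    (hlow : (d₁ : ℝ) / d₂ ≤ r) (hhigh : r ≤ d₁ * d₂) :
    ∃ K : Fin r → Matrix (Fin d₂) (Fin d₁) ℂ,
      (∀ i j, i ≠ j → ((K i)ᴴ * K j).trace = 0) ∧
      (∀ i, ((K i)ᴴ * K i).trace ≤ ((2 * d₁ / r : ℝ) : ℂ)) ∧
      (∑ i, (K i)ᴴ * K i = 1) := by
  have hld : d₁ ≤ r * d₂ := by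
    have h := (div_le_iff₀ (by positivity : (0:ℝ) < (d₂:ℝ))).mp hlow
    exact_mod_cast h
  rcases le_or_gt d₁ r with hcase | hcase
  · -- Case B : d₁ ≤ r, rank-one Kraus operators, cyclic assignment
    set m : ℕ → ℕ := fun y => ((Finset.range r).filter (fun i => i % d₁ = y)).card with hm
    have hmlb : ∀ y, y < d₁ → r / d₁ ≤ m y := by
      intro y hy
      have h : (Finset.range (r / d₁)).card ≤ m y := by
        apply Finset.card_le_card_of_injOn (fun k => y + k * d₁)
        · intro k hk
          simp only [Finset.mem_range] at hk ⊢
          refine Finset.mem_filter.mpr ⟨Finset.mem_range.mpr ?_, ?_⟩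
          · have h1 : k * d₁ + d₁ ≤ (r / d₁) * d₁ := by
              have hk1 : k + 1 ≤ r / d₁ := Finset.mem_range.mp (Finset.mem_coe.mp hk)
              calc k * d₁ + d₁ = (k+1) * d₁ := by ring
                _ ≤ (r / d₁) * d₁ := Nat.mul_le_mul_right _ hk1
            have h2 : (r / d₁) * d₁ ≤ r := Nat.div_mul_le_self r d₁
            omega
          · simp [Nat.add_mul_mod_self_right, Nat.mod_eq_of_lt hy]
        · intro a _ b _ hab
          simp only at hab
          exact Nat.eq_of_mul_eq_mul_right hd₁ (by omega)
      simpa using h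
    have hm1 : ∀ y, y < d₁ → 0 < m y := by
      intro y hy
      have h1 := hmlb y hy
      have h2 : 1 ≤ r / d₁ := (Nat.one_le_div_iff hd₁).mpr hcase
      omega
    have hm2 : ∀ y, y < d₁ → r ≤ 2 * d₁ * m y := by
      intro y hy
      have h1 := hmlb y hy
      have h2 := Nat.div_add_mod r d₁
      have h3 : r % d₁ < d₁ := Nat.mod_lt _ hd₁
      have h4 : 1 ≤ r / d₁ := (Nat.one_le_div_iff hd₁).mpr hcase
      nlinarith
    have hdiv : ∀ i : Fin r, i.val / d₁ < d₂ := by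
      intro i
      rw [Nat.div_lt_iff_lt_mul hd₁]
      calc i.val < r := i.isLt
        _ ≤ d₁ * d₂ := hhigh
        _ = d₂ * d₁ := Nat.mul_comm _ _
    have hmod : ∀ i : Fin r, i.val % d₁ < d₁ := fun i => Nat.mod_lt _ hd₁
    refine ⟨fun i => Matrix.of fun x y =>
      if x.val = i.val / d₁ ∧ y.val = i.val % d₁
      then (((Real.sqrt (m (i.val % d₁)))⁻¹ : ℝ) : ℂ) else 0, ?_, ?_, ?_⟩
    · intro i j hij
      rw [trace_formula]
      refine Finset.sum_eq_zero fun y _ => Finset.sum_eq_zero fun x _ => ?_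
      simp only [Matrix.of_apply]
      split_ifs with h1 h2
      · exfalso
        apply hij
        refine Fin.ext ?_
        rw [← Nat.div_add_mod i.val d₁, ← Nat.div_add_mod j.val d₁,
          ← h1.1, ← h1.2, ← h2.1, ← h2.2]
      all_goals simp
    · intro i
      rw [trace_formula]
      have hb := hmod i
      have ha := hdiv i
      have hmpos := hm1 _ hb
      have collapse : (∑ y : Fin d₁, ∑ x : Fin d₂,
          (starRingEnd ℂ) ((Matrix.of fun x y =>
            if x.val = i.val / d₁ ∧ y.val = i.val % d₁
            then (((Real.sqrt (m (i.val % d₁)))⁻¹ : ℝ) : ℂ) else 0) x y) *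
          ((Matrix.of fun x y =>
            if x.val = i.val / d₁ ∧ y.val = i.val % d₁
            then (((Real.sqrt (m (i.val % d₁)))⁻¹ : ℝ) : ℂ) else 0) x y))
          = (((m (i.val % d₁) : ℝ))⁻¹ : ℂ) := by
        simp only [Matrix.of_apply, apply_ite (starRingEnd ℂ), map_zero, Complex.conj_ofReal,
          ite_mul, zero_mul, mul_ite, mul_zero, ← ite_and, and_self,
          fin_val_cond ha, fin_val_cond hb, ← Complex.ofReal_mul,
          ← mul_inv, Real.mul_self_sqrt (Nat.cast_nonneg _)]
        simp [ite_and, Finset.sum_ite_eq']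
      rw [collapse]
      have hineq : ((m (i.val % d₁) : ℝ))⁻¹ ≤ 2 * (d₁:ℝ) / r := by
        rw [inv_eq_one_div, div_le_div_iff₀ (by exact_mod_cast hmpos) (by exact_mod_cast hr)]
        have h5 : (r:ℝ) ≤ 2 * (d₁:ℝ) * (m (i.val % d₁) : ℝ) := by exact_mod_cast hm2 _ hb
        linarith
      exact_mod_cast hineq
    · ext y y'
      rw [Matrix.sum_apply, Matrix.one_apply]
      simp only [Matrix.mul_apply, Matrix.conjTranspose_apply, Matrix.of_apply,
        Complex.star_def]
      by_cases hyy : y = y'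
      · subst hyy
        rw [if_pos rfl]
        have step : ∀ i : Fin r,
            (∑ x : Fin d₂, (starRingEnd ℂ) (if x.val = i.val / d₁ ∧ y.val = i.val % d₁
              then (((Real.sqrt (m (i.val % d₁)))⁻¹ : ℝ) : ℂ) else 0) *
              (if x.val = i.val / d₁ ∧ y.val = i.val % d₁
              then (((Real.sqrt (m (i.val % d₁)))⁻¹ : ℝ) : ℂ) else 0))
            = if i.val % d₁ = y.val then ((m y.val : ℂ))⁻¹ else 0 := by
          intro i
          simp only [apply_ite (starRingEnd ℂ), map_zero, Complex.conj_ofReal,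
            ite_mul, zero_mul, mul_ite, mul_zero, ← ite_and, and_self,
            fin_val_cond (hdiv i), ← Complex.ofReal_mul,
            ← mul_inv, Real.mul_self_sqrt (Nat.cast_nonneg _)]
          simp only [ite_and, Finset.sum_ite_eq', Finset.mem_univ, if_true]
          by_cases hy : y.val = i.val % d₁
          · rw [if_pos hy, if_pos hy.symm, hy]
            push_cast
            ring
          · rw [if_neg hy, if_neg (fun h => hy h.symm)]
        simp only [step]
        rw [Fin.sum_univ_eq_sum_range (fun i => if i % d₁ = y.val then ((m y.val : ℂ))⁻¹ else 0)]
        rw [← Finset.sum_filter, Finset.sum_const]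
        have hcard : ((Finset.range r).filter (fun i => i % d₁ = y.val)).card = m y.val := rfl
        rw [hcard, nsmul_eq_mul]
        have hne : ((m y.val : ℂ)) ≠ 0 := by
          exact_mod_cast (hm1 y.val y.isLt).ne'
        rw [mul_inv_cancel₀ hne]
      · rw [if_neg hyy]
        refine Finset.sum_eq_zero fun i _ => Finset.sum_eq_zero fun x _ => ?_
        split_ifs with h1 h2
        · exact absurd (Fin.ext (h1.2.trans h2.2.symm)) hyy
        all_goals simp
  · -- Case A : r < d₁, partial-isometry Kraus operators from blocks of columns
    set cc : ℕ := (d₁ - 1) / r + 1 with hcc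
    have hc0 : 0 < cc := Nat.succ_pos _
    have hc1 : d₁ ≤ r * cc := by
      have h1 := Nat.div_add_mod (d₁ - 1) r
      have h2 : (d₁ - 1) % r < r := Nat.mod_lt _ hr
      have h3 : r * cc = r * ((d₁ - 1) / r) + r := by rw [hcc, Nat.mul_add, Nat.mul_one]
      omega
    have hc2 : cc ≤ d₂ := by
      have h1 : (d₁ - 1) / r < d₂ := by
        rw [Nat.div_lt_iff_lt_mul hr]
        have : r * d₂ = d₂ * r := Nat.mul_comm _ _
        omega
      omega
    have hc3 : r * cc ≤ 2 * d₁ := by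
      have h1 : (d₁ - 1) / r * r ≤ d₁ - 1 := Nat.div_mul_le_self _ _
      have h3 : r * cc = (d₁ - 1) / r * r + r := by
        rw [hcc, Nat.mul_add, Nat.mul_one, Nat.mul_comm]
      omega
    have hxlt : ∀ y : Fin d₁, y.val % cc < d₂ := fun y =>
      lt_of_lt_of_le (Nat.mod_lt _ hc0) hc2
    have hilt : ∀ y : Fin d₁, y.val / cc < r := by
      intro y
      rw [Nat.div_lt_iff_lt_mul hc0]
      calc y.val < d₁ := y.isLt
        _ ≤ r * cc := hc1
    refine ⟨fun i => Matrix.of fun x y =>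
      if x.val = y.val % cc ∧ y.val / cc = i.val then (1:ℂ) else 0, ?_, ?_, ?_⟩
    · intro i j hij
      rw [trace_formula]
      refine Finset.sum_eq_zero fun y _ => Finset.sum_eq_zero fun x _ => ?_
      simp only [Matrix.of_apply]
      split_ifs with h1 h2
      · exact absurd (Fin.ext (h1.2.symm.trans h2.2)) hij
      all_goals simp
    · intro i
      rw [trace_formula]
      have collapse : ∀ y : Fin d₁, (∑ x : Fin d₂,
          (starRingEnd ℂ) ((Matrix.of fun x y =>
            if x.val = y.val % cc ∧ y.val / cc = i.val then (1:ℂ) else 0) x y) *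
          ((Matrix.of fun x y =>
            if x.val = y.val % cc ∧ y.val / cc = i.val then (1:ℂ) else 0) x y))
          = if y.val / cc = i.val then (1:ℂ) else 0 := by
        intro y
        simp only [Matrix.of_apply, apply_ite (starRingEnd ℂ), map_zero, _root_.map_one,
          ite_mul, zero_mul, mul_ite, mul_zero, mul_one, ← ite_and, and_self,
          fin_val_cond (hxlt y)]
        simp [ite_and, Finset.sum_ite_eq']
      rw [Finset.sum_congr rfl fun y _ => collapse y]
      rw [Finset.sum_boole]
      have hcard : (Finset.univ.filter (fun y : Fin d₁ => y.val / cc = i.val)).card ≤ cc := by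
        have h := Finset.card_le_card_of_injOn
          (s := Finset.univ.filter (fun y : Fin d₁ => y.val / cc = i.val))
          (t := Finset.range cc) (fun y : Fin d₁ => y.val % cc) ?_ ?_
        · simpa using h
        · intro y _
          exact Finset.mem_range.mpr (Nat.mod_lt _ hc0)
        · intro a ha b hb hab
          simp only [Finset.mem_coe, Finset.mem_filter] at ha hb
          have e1 := Nat.div_add_mod a.val cc
          have e2 := Nat.div_add_mod b.val cc
          refine Fin.ext ?_
          have hd : cc * (a.val / cc) = cc * (b.val / cc) := by rw [ha.2, hb.2]
          simp only at hab
          omega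
      have hfin : ((Finset.univ.filter (fun y : Fin d₁ => y.val / cc = i.val)).card : ℝ)
          ≤ 2 * (d₁:ℝ) / r := by
        have h1 : ((Finset.univ.filter (fun y : Fin d₁ => y.val / cc = i.val)).card : ℝ)
            ≤ (cc : ℝ) := by exact_mod_cast hcard
        have h2 : (cc : ℝ) ≤ 2 * (d₁:ℝ) / r := by
          rw [le_div_iff₀ (by exact_mod_cast hr : (0:ℝ) < (r:ℝ))]
          have : ((r * cc : ℕ) : ℝ) ≤ ((2 * d₁ : ℕ) : ℝ) := by exact_mod_cast hc3
          push_cast at this ⊢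
          linarith
        linarith
      exact_mod_cast hfin
    · ext y y'
      rw [Matrix.sum_apply, Matrix.one_apply]
      simp only [Matrix.mul_apply, Matrix.conjTranspose_apply, Matrix.of_apply,
        Complex.star_def]
      by_cases hyy : y = y'
      · subst hyy
        rw [if_pos rfl]
        have step : ∀ i : Fin r, (∑ x : Fin d₂,
            (starRingEnd ℂ) (if x.val = y.val % cc ∧ y.val / cc = i.val then (1:ℂ) else 0) *
            (if x.val = y.val % cc ∧ y.val / cc = i.val then (1:ℂ) else 0))
            = if i = ⟨y.val / cc, hilt y⟩ then (1:ℂ) else 0 := by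
          intro i
          simp only [apply_ite (starRingEnd ℂ), map_zero, _root_.map_one,
            ite_mul, zero_mul, mul_ite, mul_zero, mul_one, ← ite_and, and_self,
            fin_val_cond (hxlt y)]
          simp only [ite_and, Finset.sum_ite_eq', Finset.mem_univ, if_true]
          congr 1
          rw [eq_iff_iff, Fin.ext_iff]
          exact ⟨fun h => h.symm, fun h => h.symm⟩
        simp only [step]
        simp [Finset.sum_ite_eq']
      · rw [if_neg hyy]
        refine Finset.sum_eq_zero fun i _ => Finset.sum_eq_zero fun x _ => ?_
        split_ifs with h1 h2
        · exfalso
          apply hyy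
          refine Fin.ext ?_
          have e1 := Nat.div_add_mod y.val cc
          have e2 := Nat.div_add_mod y'.val cc
          have hd : cc * (y.val / cc) = cc * (y'.val / cc) := by
            rw [h1.2, h2.2]
          have hmm : y.val % cc = y'.val % cc := h1.1.symm.trans h2.1
          omega
        all_goals simp
end
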